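/- Let (X,T) be a topological space and M ⊆ ℝ^X a family of real-valued functions on X. Then M strongly separates points on (X,T) if and only if T is contained in the initial topology O_M(X) on X induced by M (the coarsest topology on X making every g ∈ M continuous into ℝ with its standard topology). -/

import Mathlib

open Set Filter Topology

/-- A family `M` of real-valued functions strongly separates points on the
topological space `X`: for every `x ∈ X` and open neighborhood `O` of `x` there are
finitely many `g₁, …, g_k ∈ M` with `inf_{y ∉ O} max_i |g_i y − g_i x| > 0`. -/
def SSepPts {X : Type*} [TopologicalSpace X] (M : Set (X → ℝ)) : Prop :=
  ∀ (x : X) (O : Set X), IsOpen O → x ∈ O →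
    ∃ (k : ℕ) (g : Fin k → X → ℝ), (∀ i, g i ∈ M) ∧
      ∃ ε > (0 : ℝ), ∀ y, y ∉ O → ∃ i, ε ≤ |g i y - g i x|

/-- `M` strongly separates points on `(X, T)` iff `T` is contained
in the initial topology `O_M(X)` induced by `M` (i.e. `O_M(X)` is finer than `T`). -/
theorem stmt7 {X : Type*} [t : TopologicalSpace X] (M : Set (X → ℝ)) :
    SSepPts M ↔
      (⨅ g : M, TopologicalSpace.induced (g : X → ℝ) inferInstance) ≤ t := by
  set T' := ⨅ g : M, TopologicalSpace.induced (g : X → ℝ) inferInstance with hT'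
  have hn : ∀ x : X, @nhds X T' x = ⨅ g : M, Filter.comap (g : X → ℝ) (𝓝 ((g : X → ℝ) x)) := by
    intro x
    rw [hT', _root_.nhds_iInf]
    simp only [nhds_induced]
  constructor
  · intro h
    rw [le_iff_nhds T' t]
    intro x
    rw [hn x, (@nhds_basis_opens X t x).ge_iff]
    rintro O ⟨hx, hO⟩
    obtain ⟨k, g, hg, ε, hε, hsep⟩ := h x O hO hx
    have hmem : (⋂ i, (g i) ⁻¹' Metric.ball (g i x) ε) ∈
        ⨅ g : M, Filter.comap (g : X → ℝ) (𝓝 ((g : X → ℝ) x)) := by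
      refine Filter.iInter_mem.2 fun i => ?_
      have hle := iInf_le (fun g : M => Filter.comap (g : X → ℝ) (𝓝 ((g : X → ℝ) x)))
        ⟨g i, hg i⟩
      exact hle (Filter.preimage_mem_comap (Metric.ball_mem_nhds _ hε))
    refine Filter.mem_of_superset hmem fun y hy => ?_
    by_contra hyO
    obtain ⟨i, hi⟩ := hsep y hyO
    have := Set.mem_iInter.1 hy i
    rw [Set.mem_preimage, Metric.mem_ball, Real.dist_eq] at this
    linarith
  · intro h x O hO hx
    have hO' : O ∈ ⨅ g : M, Filter.comap (g : X → ℝ) (𝓝 ((g : X → ℝ) x)) := by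
      rw [← hn x]
      have h2 : O ∈ @nhds X t x := @IsOpen.mem_nhds X t x O hO hx
      exact ((le_iff_nhds T' t).mp h x) h2
    rw [Filter.mem_iInf] at hO'
    obtain ⟨I, hIfin, V, hV, rfl⟩ := hO'
    haveI := hIfin.fintype
    have key : ∀ i : I, ∃ δ > (0:ℝ), ∀ y : X, |(i.1 : X → ℝ) y - (i.1 : X → ℝ) x| < δ → y ∈ V i := by
      intro i
      obtain ⟨U, hU, hUsub⟩ := Filter.mem_comap.1 (hV i)
      obtain ⟨δ, hδ, hball⟩ := Metric.mem_nhds_iff.1 hU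
      refine ⟨δ, hδ, fun y hy => hUsub ?_⟩
      exact Set.mem_preimage.2 (hball (by rwa [Metric.mem_ball, Real.dist_eq]))
    choose δ hδpos hδsub using key
    by_cases hne : Nonempty I
    · let e := (Fintype.equivFin I).symm
      refine ⟨Fintype.card I, fun j => (e j).1, fun j => (e j).1.2, ?_⟩
      have hne' : (Finset.univ : Finset I).Nonempty := Finset.univ_nonempty
      refine ⟨Finset.univ.inf' hne' δ, ?_, ?_⟩
      · refine (Finset.lt_inf'_iff hne').2 ?_
        exact fun i _ => hδpos i
      · intro y hy
        rw [Set.mem_iInter] at hy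
        push_neg at hy
        obtain ⟨i, hi⟩ := hy
        refine ⟨e.symm i, ?_⟩
        have h1 : ¬ |(i.1 : X → ℝ) y - (i.1 : X → ℝ) x| < δ i := fun hlt => hi (hδsub i y hlt)
        push_neg at h1
        calc Finset.univ.inf' hne' δ ≤ δ i := Finset.inf'_le _ (Finset.mem_univ i)
          _ ≤ |(i.1 : X → ℝ) y - (i.1 : X → ℝ) x| := h1
          _ = _ := by simp [e.apply_symm_apply]
    · refine ⟨0, fun j => j.elim0, fun j => j.elim0, 1, one_pos, fun y hy => ?_⟩
      exact absurd (Set.mem_iInter.2 fun i => absurd ⟨i⟩ hne) hy
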